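/- Let R be a ring and V a right R-module of finite length whose composition factors (Jordan–Hölder factors) are pairwise non-isomorphic (V is multiplicity-free). Then the lattice of submodules of V is distributive: for all submodules A, B, C of V one has A ∩ (B + C) = (A ∩ B) + (A ∩ C). -/

import Mathlib

universe u v

open JordanHolderLattice

section Occ

variable {α : Type*} {r : SetRel α α}

/-- `(u, v)` occurs as a consecutive pair in the series `p`. -/
def RelSeries.Occ (p : RelSeries r) (u v : α) : Prop :=
  ∃ i : Fin p.length, p i.castSucc = u ∧ p i.succ = v

lemma RelSeries.occ_snoc_self (p : RelSeries r) (x : α) (hx : (p.last, x) ∈ r) :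
    (p.snoc x hx).Occ p.last x := by
  refine ⟨⟨p.length, by simp⟩, ?_, ?_⟩
  · have h : (⟨p.length, by simp⟩ : Fin (p.snoc x hx).length).castSucc
        = Fin.castSucc (Fin.last p.length) := by
      ext; rfl
    erw [h, RelSeries.snoc_castSucc]
    rfl
  · have h : (⟨p.length, by simp⟩ : Fin (p.snoc x hx).length).succ
        = Fin.last (p.length + 1) := by
      ext; rfl
    rw [h]
    exact RelSeries.last_snoc' _ _ _

lemma RelSeries.Occ.snoc {p : RelSeries r} {u v : α} (h : p.Occ u v) (x : α) (hx : (p.last, x) ∈ r) :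
    (p.snoc x hx).Occ u v := by
  obtain ⟨i, h1, h2⟩ := h
  refine ⟨i.castSucc, ?_, ?_⟩
  · exact (RelSeries.snoc_castSucc _ _ _ i.castSucc).trans h1
  · exact (congrArg (p.snoc x hx) (Fin.succ_castSucc i)).trans ((RelSeries.snoc_castSucc _ _ _ i.succ).trans h2)

lemma RelSeries.Occ.smash_left {p q : RelSeries r} (hpq : p.last = q.head) {u v : α}
    (h : p.Occ u v) : (p.smash q hpq).Occ u v := by
  obtain ⟨i, h1, h2⟩ := h
  exact ⟨i.castAdd q.length, by erw [RelSeries.smash_castAdd]; exact h1,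
    by erw [RelSeries.smash_succ_castAdd]; exact h2⟩

lemma RelSeries.Occ.smash_right {p q : RelSeries r} (hpq : p.last = q.head) {u v : α}
    (h : q.Occ u v) : (p.smash q hpq).Occ u v := by
  obtain ⟨i, h1, h2⟩ := h
  exact ⟨i.natAdd p.length, by erw [RelSeries.smash_natAdd]; exact h1,
    by erw [RelSeries.smash_succ_natAdd]; exact h2⟩

end Occ

section Aux

variable {R : Type u} [Ring R] {M : Type v} [AddCommGroup M] [Module R M]

/-- In an Artinian module, above any strict inclusion there is a covering step. -/
lemma mf_exists_cover [IsArtinian R M] {u v : Submodule R M} (h : u < v) :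
    ∃ w, u ⋖ w ∧ w ≤ v := by
  obtain ⟨w, ⟨hw1, hw2⟩, hmin⟩ :=
    (IsWellFounded.wf (r := ((· < ·) : Submodule R M → Submodule R M → Prop))).has_min
      {x | u < x ∧ x ≤ v} ⟨v, h, le_rfl⟩
  exact ⟨w, ⟨hw1, fun z hz hzw => hmin z ⟨hz, hzw.le.trans hw2⟩ hzw⟩, hw2⟩

/-- In a module of finite length, any pair `u ≤ v` is connected by a composition series. -/
lemma mf_exists_series [IsArtinian R M] [IsNoetherian R M] :
    ∀ u v : Submodule R M, u ≤ v →
      ∃ t : CompositionSeries (Submodule R M), t.head = u ∧ t.last = v := by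
  intro u
  induction u using WellFoundedGT.induction with
  | _ u IH =>
    intro v hu
    rcases eq_or_lt_of_le hu with rfl | hlt
    · exact ⟨RelSeries.singleton _ u, rfl, rfl⟩
    · obtain ⟨w, hw, hwv⟩ := mf_exists_cover hlt
      obtain ⟨t, ht1, ht2⟩ := IH w hw.lt v hwv
      exact ⟨t.cons u (show u ⋖ t.head from ht1 ▸ hw), by simp, by simpa⟩

/-- Key lemma: in a multiplicity-free module there cannot be two disjoint isomorphic
covering pairs. -/
lemma mf_key (s : CompositionSeries (Submodule R M))
    (hhead : s.head = ⊥) (hlast : s.last = ⊤)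
    (hmf : ∀ i j : Fin s.length,
      Iso (s i.castSucc, s i.succ) (s j.castSucc, s j.succ) → i = j)
    {u₁ v₁ u₂ v₂ : Submodule R M} (h1 : u₁ ⋖ v₁) (h12 : v₁ ≤ u₂) (h2 : u₂ ⋖ v₂)
    (hiso : Iso (u₁, v₁) (u₂, v₂)) : False := by
  have hfl : IsFiniteLength R M :=
    isFiniteLength_of_exists_compositionSeries ⟨s, hhead, hlast⟩
  obtain ⟨hNoeth, hArt⟩ := isFiniteLength_iff_isNoetherian_isArtinian.mp hfl
  obtain ⟨t0, ht0h, ht0l⟩ := mf_exists_series (⊥ : Submodule R M) u₁ bot_le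
  obtain ⟨tm, htmh, html⟩ := mf_exists_series v₁ u₂ h12
  obtain ⟨th, hthh, hthl⟩ := mf_exists_series v₂ (⊤ : Submodule R M) le_top
  -- build a composition series of `M` containing both covering pairs
  have hm1 : JordanHolderLattice.IsMaximal t0.last v₁ := ht0l ▸ h1
  set s1 : CompositionSeries (Submodule R M) := t0.snoc v₁ hm1 with hs1
  have hs1l : s1.last = v₁ := RelSeries.last_snoc _ _ _
  set s2 : CompositionSeries (Submodule R M) := s1.smash tm (by rw [hs1l, htmh]) with hs2
  have hs2l : s2.last = u₂ := by rw [hs2, RelSeries.last_smash, html]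
  have hm2 : JordanHolderLattice.IsMaximal s2.last v₂ := hs2l ▸ h2
  set s3 : CompositionSeries (Submodule R M) := s2.snoc v₂ hm2 with hs3
  set t : CompositionSeries (Submodule R M) :=
    s3.smash th (by rw [hs3, RelSeries.last_snoc, hthh]) with ht
  have hth : t.head = ⊥ := by
    rw [ht, RelSeries.head_smash, hs3, RelSeries.head_snoc, hs2, RelSeries.head_smash,
      hs1, RelSeries.head_snoc, ht0h]
  have htl : t.last = ⊤ := by rw [ht, RelSeries.last_smash, hthl]
  have occ1 : t.Occ u₁ v₁ := by
    have := RelSeries.occ_snoc_self t0 v₁ hm1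
    rw [ht0l] at this
    exact (((this.smash_left _).snoc _ _).smash_left _)
  have occ2 : t.Occ u₂ v₂ := by
    have := RelSeries.occ_snoc_self s2 v₂ hm2
    rw [hs2l] at this
    exact this.smash_left _
  obtain ⟨i, hi1, hi2⟩ := occ1
  obtain ⟨j, hj1, hj2⟩ := occ2
  obtain ⟨f, hf⟩ := t.jordan_holder s (hth.trans hhead.symm) (htl.trans hlast.symm)
  have hfi := hf i
  have hfj := hf j
  rw [hi1, hi2] at hfi
  rw [hj1, hj2] at hfj
  have : f i = f j :=
    hmf _ _ (iso_trans (iso_symm hfi) (iso_trans hiso hfj))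
  have hij : i = j := f.injective this
  rw [hij, hj1] at hi1
  exact (lt_of_lt_of_le h1.lt h12).ne' hi1

end Aux

/-- Let `R` be a ring and `V` a right `R`-module (a left `Rᵐᵒᵖ`-module)
of finite length which is multiplicity-free: it admits a composition series from `⊥` to `⊤`
whose simple subquotients are pairwise non-isomorphic.  Then the lattice of submodules of
`V` is distributive: `A ⊓ (B ⊔ C) = (A ⊓ B) ⊔ (A ⊓ C)` for all submodules `A`, `B`, `C`. -/
theorem submodule_lattice_distributive_of_multiplicity_free
    (R : Type u) [Ring R] (V : Type v) [AddCommGroup V] [Module Rᵐᵒᵖ V]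
    (s : CompositionSeries (Submodule Rᵐᵒᵖ V))
    (hhead : s.head = ⊥) (hlast : s.last = ⊤)
    (hmf : ∀ i j : Fin s.length,
      JordanHolderLattice.Iso (s i.castSucc, s i.succ) (s j.castSucc, s j.succ) → i = j)
    (A B C : Submodule Rᵐᵒᵖ V) :
    A ⊓ (B ⊔ C) = (A ⊓ B) ⊔ (A ⊓ C) := by
  by_contra hne
  have hfl : IsFiniteLength Rᵐᵒᵖ V :=
    isFiniteLength_of_exists_compositionSeries ⟨s, hhead, hlast⟩
  obtain ⟨hNoeth, hArt⟩ := isFiniteLength_iff_isNoetherian_isArtinian.mp hfl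
  set D : Submodule Rᵐᵒᵖ V := A ⊓ (B ⊔ C) with hD
  set E : Submodule Rᵐᵒᵖ V := (A ⊓ B) ⊔ (A ⊓ C) with hE
  have hED : E ≤ D := sup_le (inf_le_inf_left _ le_sup_left) (inf_le_inf_left _ le_sup_right)
  have hlt : E < D := lt_of_le_of_ne hED (fun h => hne h.symm)
  obtain ⟨D', hcov, hD'le⟩ := mf_exists_cover hlt
  set G : Submodule Rᵐᵒᵖ V := B ⊔ (A ⊓ C) with hG
  -- D ⊓ G = E
  have hDG : D ⊓ G = E := by
    have h1 : D ⊓ G = A ⊓ G := by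
      rw [hD, inf_assoc]
      congr 1
      exact inf_eq_right.mpr (sup_le le_sup_left (inf_le_right.trans le_sup_right))
    have h2 : A ⊓ G = E := by
      rw [hG, inf_comm, sup_comm, sup_inf_assoc_of_le _ (inf_le_left : A ⊓ C ≤ A), hE,
        inf_comm B A, sup_comm]
    rw [h1, h2]
  have hEG : E ≤ G := sup_le (inf_le_right.trans le_sup_left) le_sup_right
  have hGD' : G ⊓ D' = E :=
    le_antisymm (by
        calc G ⊓ D' ≤ G ⊓ D := inf_le_inf_left _ hD'le
        _ = E := by rw [inf_comm, hDG])
      (le_inf hEG hcov.lt.le)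
  -- first translated pair, inside [B ⊓ C, C]
  have hcovG : G ⋖ G ⊔ D' := covBy_sup_of_inf_covBy_right (hGD' ▸ hcov : G ⊓ D' ⋖ D')
  set G' : Submodule Rᵐᵒᵖ V := G ⊔ D' with hG'
  have isoG : Iso (G, G') (E, D') := by
    have := second_iso (X := Submodule Rᵐᵒᵖ V) (x := G) (y := D') hcovG
    rwa [hGD'] at this
  have hD'BC : D' ≤ B ⊔ C := hD'le.trans (inf_le_right)
  have hG'GC : G' ≤ G ⊔ C :=
    sup_le le_sup_left (hD'BC.trans (sup_le (le_sup_left.trans' le_sup_left) le_sup_right))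
  have hGC : G ⊔ (G' ⊓ C) = G' := by
    rw [sup_comm, inf_sup_assoc_of_le _ (le_sup_left : G ≤ G'), sup_comm C G]
    exact inf_eq_left.mpr hG'GC
  have hcov1 : G ⋖ G ⊔ (G' ⊓ C) := by rw [hGC]; exact hcovG
  have hGinf : G ⊓ (G' ⊓ C) = G ⊓ C := by
    rw [← inf_assoc, inf_eq_left.mpr (le_sup_left : G ≤ G')]
  have hcovp1 : G ⊓ C ⋖ G' ⊓ C := by
    have := inf_covBy_of_covBy_sup_left hcov1
    rwa [hGinf] at this
  have iso1 : Iso (G ⊓ C, G' ⊓ C) (E, D') := by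
    have h := second_iso (X := Submodule Rᵐᵒᵖ V) (x := G) (y := G' ⊓ C) hcov1
    rw [hGC, hGinf] at h
    exact iso_trans (iso_symm h) isoG
  -- second translated pair, inside [C, B ⊔ C]
  have hCE : D' ⊓ (C ⊔ E) = E := by
    refine le_antisymm ?_ (le_inf hcov.lt.le le_sup_right)
    have hCEeq : C ⊔ E = C ⊔ (A ⊓ B) := by
      rw [hE, sup_comm (A ⊓ B) (A ⊓ C), ← sup_assoc,
        sup_eq_left.mpr (inf_le_right : A ⊓ C ≤ C)]
    have hDCE : D ⊓ (C ⊔ E) = E := by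
      rw [hCEeq, hD, inf_assoc]
      have : (B ⊔ C) ⊓ (C ⊔ A ⊓ B) = C ⊔ A ⊓ B :=
        inf_eq_right.mpr (sup_le le_sup_right (inf_le_right.trans le_sup_left))
      rw [this, inf_comm, sup_comm, sup_inf_assoc_of_le _ (inf_le_left : A ⊓ B ≤ A), hE,
        inf_comm C A]
    calc D' ⊓ (C ⊔ E) ≤ D ⊓ (C ⊔ E) := inf_le_inf_right _ hD'le
      _ = E := hDCE
  have hCE' : (C ⊔ E) ⊓ D' = E := by rw [inf_comm]; exact hCE
  have hcov2 : (C ⊔ E) ⋖ (C ⊔ E) ⊔ D' := by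
    refine covBy_sup_of_inf_covBy_right ?_
    rw [hCE']
    exact hcov
  have hCED' : (C ⊔ E) ⊔ D' = C ⊔ D' := by
    rw [sup_assoc, sup_eq_right.mpr hcov.lt.le]
  have iso2 : Iso (C ⊔ E, C ⊔ D') (E, D') := by
    have h := second_iso (X := Submodule Rᵐᵒᵖ V) (x := C ⊔ E) (y := D') hcov2
    rw [hCED'] at h
    rw [hCE'] at h
    exact h
  have hcovp2 : (C ⊔ E) ⋖ C ⊔ D' := by rw [← hCED']; exact hcov2
  -- the two pairs are disjoint and isomorphic: contradiction
  exact mf_key s hhead hlast hmf hcovp1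
    (le_trans inf_le_right le_sup_left) hcovp2
    (iso_trans iso1 (iso_symm iso2))
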